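/- Let f = x₁·(x₁² − x₂² − x₃² − x₄²) ∈ ℝ[x₁,x₂,x₃,x₄]. Then the rank of f over ℝ is exactly 7, and the Waring rank of f over ℝ is exactly 7. -/

import Mathlib

/-- A tensor of format `n × n × n` is symmetric if its entries are unchanged under
every permutation of the three indices. -/
def IsSymTensor {K : Type*} [Field K] {n : ℕ} (T : Fin n → Fin n → Fin n → K) : Prop :=
  ∀ (σ : Equiv.Perm (Fin 3)) (v : Fin 3 → Fin n),
    T (v (σ 0)) (v (σ 1)) (v (σ 2)) = T (v 0) (v 1) (v 2)

/-- The rank of an `n × n × n` tensor over `K`: the least `r` admitting a decomposition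
into `r` rank-one terms. -/
noncomputable def tensorRank {K : Type*} [Field K] {n : ℕ}
    (T : Fin n → Fin n → Fin n → K) : ℕ :=
  sInf {r : ℕ | ∃ u v w : Fin r → Fin n → K,
    ∀ i j k, T i j k = ∑ s, u s i * v s j * w s k}

/-- The symmetric rank of an `n × n × n` tensor over `K`. -/
noncomputable def symTensorRank {K : Type*} [Field K] {n : ℕ}
    (T : Fin n → Fin n → Fin n → K) : ℕ :=
  sInf {r : ℕ | ∃ (lam : Fin r → K) (u : Fin r → Fin n → K),
    ∀ i j k, T i j k = ∑ s, lam s * (u s i * u s j * u s k)}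

open MvPolynomial in
/-- The Waring rank over `ℝ` of a polynomial in four variables: the least `r` such that
`f` is a linear combination of `r` cubes of linear forms. -/
noncomputable def waringRank (f : MvPolynomial (Fin 4) ℝ) : ℕ :=
  sInf {r : ℕ | ∃ (lam : Fin r → ℝ) (l : Fin r → Fin 4 → ℝ),
    f = ∑ s, C (lam s) * (∑ i, C (l s i) * X i) ^ 3}

open MvPolynomial in
/-- The rank over `ℝ` of a cubic `f`: the tensor rank of the unique symmetric
`4 × 4 × 4` tensor `T` with `f = ∑ T i j k · xᵢ xⱼ xₖ`. -/
noncomputable def cubicRank (f : MvPolynomial (Fin 4) ℝ) : ℕ :=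
  sInf {r : ℕ | ∃ T : Fin 4 → Fin 4 → Fin 4 → ℝ, IsSymTensor T ∧
    f = (∑ i, ∑ j, ∑ k, C (T i j k) * X i * X j * X k) ∧ tensorRank T ≤ r}

namespace MinkowskiCubicAux

open Finset Matrix MvPolynomial

/-! ### The tensor of the Minkowski cubic -/

noncomputable def tv (e q : ℕ) : ℝ :=
  if e = 0 then 1
  else if (e = 2 ∧ q = 2) ∨ (e = 4 ∧ q = 8) ∨ (e = 6 ∧ q = 18) then -1/3 else 0

noncomputable def T0 (i j k : Fin 4) : ℝ := tv (i.1 + j.1 + k.1) (i.1^2 + j.1^2 + k.1^2)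

@[simp] lemma fvv0 : ((0 : Fin 4) : ℕ) = 0 := rfl
@[simp] lemma fvv1 : ((1 : Fin 4) : ℕ) = 1 := rfl
@[simp] lemma fvv2 : ((2 : Fin 4) : ℕ) = 2 := rfl
@[simp] lemma fvv3 : ((3 : Fin 4) : ℕ) = 3 := rfl
@[simp] lemma fs0 : ((0 : Fin 7) : ℕ) = 0 := rfl
@[simp] lemma fs1 : ((1 : Fin 7) : ℕ) = 1 := rfl
@[simp] lemma fs2 : ((2 : Fin 7) : ℕ) = 2 := rfl
@[simp] lemma fs3 : ((3 : Fin 7) : ℕ) = 3 := rfl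
@[simp] lemma fs4 : ((4 : Fin 7) : ℕ) = 4 := rfl
@[simp] lemma fs5 : ((5 : Fin 7) : ℕ) = 5 := rfl
@[simp] lemma fs6 : ((6 : Fin 7) : ℕ) = 6 := rfl

lemma T0_s01 : ∀ i j k, T0 i j k = T0 j i k := by
  intro i j k; unfold T0; congr 1 <;> ring

lemma T0_s12 : ∀ i j k, T0 i j k = T0 i k j := by
  intro i j k; unfold T0; congr 1 <;> ring

lemma symOfSwaps {T : Fin 4 → Fin 4 → Fin 4 → ℝ}
    (h1 : ∀ a b c, T a b c = T b a c) (h2 : ∀ a b c, T a b c = T a c b) :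
    IsSymTensor T := by
  intro σ v
  obtain ⟨x, hx⟩ : ∃ x, σ 0 = x := ⟨_, rfl⟩
  obtain ⟨y, hy⟩ : ∃ y, σ 1 = y := ⟨_, rfl⟩
  obtain ⟨z, hz⟩ : ∃ z, σ 2 = z := ⟨_, rfl⟩
  rw [hx, hy, hz]
  have exy : x ≠ y := fun h => by
    have := σ.injective (hx.trans (h.trans hy.symm)); exact absurd this (by decide)
  have exz : x ≠ z := fun h => by
    have := σ.injective (hx.trans (h.trans hz.symm)); exact absurd this (by decide)
  have eyz : y ≠ z := fun h => by
    have := σ.injective (hy.trans (h.trans hz.symm)); exact absurd this (by decide)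
  fin_cases x <;> fin_cases y <;> fin_cases z <;>
    simp_all <;>
    first
      | rfl
      | exact h1 _ _ _
      | exact (h2 _ _ _).symm
      | exact (h1 _ _ _).trans ((h2 _ _ _).symm)
      | exact (h2 _ _ _).trans (h1 _ _ _)
      | exact (h1 _ _ _).trans ((h2 _ _ _).trans (h1 _ _ _))

lemma T0_sym : IsSymTensor T0 := symOfSwaps T0_s01 T0_s12

/-! ### Polarization and uniqueness of the symmetric tensor -/

noncomputable def Bf (T : Fin 4 → Fin 4 → Fin 4 → ℝ) (a b c : Fin 4 → ℝ) : ℝ :=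
  ∑ i, ∑ j, ∑ k, T i j k * a i * b j * c k

variable {T : Fin 4 → Fin 4 → Fin 4 → ℝ}

lemma Badd1 (T : Fin 4 → Fin 4 → Fin 4 → ℝ) (a a' b c : Fin 4 → ℝ) :
    Bf T (a + a') b c = Bf T a b c + Bf T a' b c := by
  unfold Bf
  rw [← Finset.sum_add_distrib]
  refine Finset.sum_congr rfl fun i _ => ?_
  rw [← Finset.sum_add_distrib]
  refine Finset.sum_congr rfl fun j _ => ?_
  rw [← Finset.sum_add_distrib]
  refine Finset.sum_congr rfl fun k _ => ?_
  simp [Pi.add_apply]; ring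

lemma Badd2 (T : Fin 4 → Fin 4 → Fin 4 → ℝ) (a b b' c : Fin 4 → ℝ) :
    Bf T a (b + b') c = Bf T a b c + Bf T a b' c := by
  unfold Bf
  rw [← Finset.sum_add_distrib]
  refine Finset.sum_congr rfl fun i _ => ?_
  rw [← Finset.sum_add_distrib]
  refine Finset.sum_congr rfl fun j _ => ?_
  rw [← Finset.sum_add_distrib]
  refine Finset.sum_congr rfl fun k _ => ?_
  simp [Pi.add_apply]; ring

lemma Badd3 (T : Fin 4 → Fin 4 → Fin 4 → ℝ) (a b c c' : Fin 4 → ℝ) :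
    Bf T a b (c + c') = Bf T a b c + Bf T a b c' := by
  unfold Bf
  rw [← Finset.sum_add_distrib]
  refine Finset.sum_congr rfl fun i _ => ?_
  rw [← Finset.sum_add_distrib]
  refine Finset.sum_congr rfl fun j _ => ?_
  rw [← Finset.sum_add_distrib]
  refine Finset.sum_congr rfl fun k _ => ?_
  simp [Pi.add_apply]; ring

lemma Bs01 (h : ∀ i j k, T i j k = T j i k) (a b c : Fin 4 → ℝ) :
    Bf T a b c = Bf T b a c := by
  unfold Bf
  rw [Finset.sum_comm]
  refine Finset.sum_congr rfl fun j _ => Finset.sum_congr rfl fun i _ =>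
    Finset.sum_congr rfl fun k _ => ?_
  rw [h i j k]; ring

lemma Bs12 (h : ∀ i j k, T i j k = T i k j) (a b c : Fin 4 → ℝ) :
    Bf T a b c = Bf T a c b := by
  unfold Bf
  refine Finset.sum_congr rfl fun i _ => ?_
  rw [Finset.sum_comm]
  refine Finset.sum_congr rfl fun k _ => Finset.sum_congr rfl fun j _ => ?_
  rw [h i j k]; ring

lemma hpol (h01 : ∀ i j k, T i j k = T j i k) (h12 : ∀ i j k, T i j k = T i k j)
    (a b c : Fin 4 → ℝ) :
    6 * Bf T a b c =
      Bf T (a+b+c) (a+b+c) (a+b+c) - Bf T (a+b) (a+b) (a+b) - Bf T (a+c) (a+c) (a+c)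
        - Bf T (b+c) (b+c) (b+c) + Bf T a a a + Bf T b b b + Bf T c c c := by
  have s1 := Bs01 h01
  have s2 := Bs12 h12
  have h_aba : Bf T a b a = Bf T a a b := s2 a b a
  have h_baa : Bf T b a a = Bf T a a b := (s1 b a a).trans h_aba
  have h_aca : Bf T a c a = Bf T a a c := s2 a c a
  have h_caa : Bf T c a a = Bf T a a c := (s1 c a a).trans h_aca
  have h_bab : Bf T b a b = Bf T a b b := s1 b a b
  have h_bba : Bf T b b a = Bf T a b b := (s2 b b a).trans h_bab
  have h_acb : Bf T a c b = Bf T a b c := s2 a c b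
  have h_bac : Bf T b a c = Bf T a b c := s1 b a c
  have h_bca : Bf T b c a = Bf T a b c := (s2 b c a).trans h_bac
  have h_cab : Bf T c a b = Bf T a b c := (s1 c a b).trans h_acb
  have h_cba : Bf T c b a = Bf T a b c := ((s1 c b a).trans ((s2 b c a).trans h_bac))
  have h_cac : Bf T c a c = Bf T a c c := s1 c a c
  have h_cca : Bf T c c a = Bf T a c c := (s2 c c a).trans h_cac
  have h_bcb : Bf T b c b = Bf T b b c := s2 b c b
  have h_cbb : Bf T c b b = Bf T b b c := (s1 c b b).trans h_bcb
  have h_cbc : Bf T c b c = Bf T b c c := s1 c b c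
  have h_ccb : Bf T c c b = Bf T b c c := (s2 c c b).trans h_cbc
  simp only [Badd1, Badd2, Badd3]
  rw [h_aba, h_baa, h_aca, h_caa, h_bab, h_bba, h_acb, h_bac, h_bca, h_cab, h_cba,
    h_cac, h_cca, h_bcb, h_cbb, h_cbc, h_ccb]
  ring

def ddv (i j : ℕ) : ℝ := if j = i then 1 else 0
def dd (i : Fin 4) : Fin 4 → ℝ := fun j => ddv i.1 j.1

lemma Bsingle (T : Fin 4 → Fin 4 → Fin 4 → ℝ) (i j k : Fin 4) :
    Bf T (dd i) (dd j) (dd k) = T i j k := by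
  unfold Bf dd ddv
  simp [Fin.val_eq_val, mul_ite, ite_mul, mul_zero, zero_mul, mul_one, Finset.sum_ite_eq']

set_option maxHeartbeats 3000000 in
lemma uniq' (T : Fin 4 → Fin 4 → Fin 4 → ℝ)
    (h01 : ∀ i j k, T i j k = T j i k) (h12 : ∀ i j k, T i j k = T i k j)
    (hP : ∀ x : Fin 4 → ℝ, (∑ i, ∑ j, ∑ k, T i j k * x i * x j * x k)
      = x 0 * (x 0^2 - x 1^2 - x 2^2 - x 3^2)) :
    T = T0 := by
  have hP' : ∀ x : Fin 4 → ℝ, Bf T x x x = x 0 * (x 0^2 - x 1^2 - x 2^2 - x 3^2) := hP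
  have key : ∀ i j k : Fin 4, 6 * T i j k =
      Bf T (dd i + dd j + dd k) (dd i + dd j + dd k) (dd i + dd j + dd k)
        - Bf T (dd i + dd j) (dd i + dd j) (dd i + dd j)
        - Bf T (dd i + dd k) (dd i + dd k) (dd i + dd k)
        - Bf T (dd j + dd k) (dd j + dd k) (dd j + dd k)
        + Bf T (dd i) (dd i) (dd i) + Bf T (dd j) (dd j) (dd j) + Bf T (dd k) (dd k) (dd k) := by
    intro i j k
    have h := hpol h01 h12 (dd i) (dd j) (dd k)
    rw [Bsingle] at h
    exact h
  funext i j k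
  have h := key i j k
  clear key
  fin_cases i <;> fin_cases j <;> fin_cases k <;>
    (simp only [hP', Pi.add_apply, dd, ddv] at h; norm_num at h; norm_num [T0, tv]; linarith)

/-! ### Determinant tools -/

lemma det_fin_four (A : Matrix (Fin 4) (Fin 4) ℝ) :
    A.det =
      A 0 0 * (A 1 1 * (A 2 2 * A 3 3 - A 2 3 * A 3 2) - A 1 2 * (A 2 1 * A 3 3 - A 2 3 * A 3 1)
        + A 1 3 * (A 2 1 * A 3 2 - A 2 2 * A 3 1))
    - A 0 1 * (A 1 0 * (A 2 2 * A 3 3 - A 2 3 * A 3 2) - A 1 2 * (A 2 0 * A 3 3 - A 2 3 * A 3 0)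
        + A 1 3 * (A 2 0 * A 3 2 - A 2 2 * A 3 0))
    + A 0 2 * (A 1 0 * (A 2 1 * A 3 3 - A 2 3 * A 3 1) - A 1 1 * (A 2 0 * A 3 3 - A 2 3 * A 3 0)
        + A 1 3 * (A 2 0 * A 3 1 - A 2 1 * A 3 0))
    - A 0 3 * (A 1 0 * (A 2 1 * A 3 2 - A 2 2 * A 3 1) - A 1 1 * (A 2 0 * A 3 2 - A 2 2 * A 3 0)
        + A 1 2 * (A 2 0 * A 3 1 - A 2 1 * A 3 0)) := by
  rw [Matrix.det_succ_row_zero]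
  simp [Fin.sum_univ_four, Matrix.det_fin_three, Matrix.submatrix, Fin.succAbove,
    show (Fin.succ 2 : Fin 4) = 3 from rfl,
    show (Fin.castSucc 2 : Fin 4) = 2 from rfl]
  ring

lemma detA (t : Fin 4 → ℝ) :
    (Matrix.of fun j k => ∑ i, t i * T0 i j k).det
      = -(1/81) * ((t 0)^2 * (3*(t 0)^2 + (t 1)^2 + (t 2)^2 + (t 3)^2)) := by
  rw [det_fin_four]
  simp only [Matrix.of_apply, Fin.sum_univ_four]
  norm_num [T0, tv]
  ring

lemma detouter (c : Fin 4 → ℝ) (v w : Fin 4 → Fin 4 → ℝ) :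
    (Matrix.of fun j k => ∑ s, c s * (v s j * w s k)).det
      = (∏ s, c s) * ((Matrix.of fun j s => v s j).det * (Matrix.of fun k s => w s k).det) := by
  have h : (Matrix.of fun j k => ∑ s, c s * (v s j * w s k))
      = (Matrix.of fun j s => v s j) * Matrix.diagonal c * (Matrix.of fun k s => w s k)ᵀ := by
    ext j k
    simp [Matrix.mul_apply, Matrix.diagonal, Finset.sum_ite_eq, Matrix.transpose_apply]
    exact Finset.sum_congr rfl fun s _ => by ring
  rw [h, Matrix.det_mul, Matrix.det_mul, Matrix.det_diagonal, Matrix.det_transpose]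
  ring

noncomputable def eb (m : ℕ) : Fin 4 → ℝ := fun i => if i.1 = m then 1 else 0

/-! ### No decomposition of `T0` into six rank-one terms -/

set_option maxHeartbeats 1000000 in
lemma no6 : ¬ ∃ u v w : Fin 6 → Fin 4 → ℝ,
    ∀ i j k, T0 i j k = ∑ s, u s i * v s j * w s k := by
  rintro ⟨u, v, w, hdec⟩
  have hA : ∀ (t : Fin 4 → ℝ) (j k : Fin 4),
      (∑ i, t i * T0 i j k) = ∑ s : Fin 6, (∑ i, t i * u s i) * (v s j * w s k) := by
    intro t j k
    have h1 : ∀ i : Fin 4, t i * T0 i j k = ∑ s : Fin 6, (t i * u s i) * (v s j * w s k) := by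
      intro i; rw [hdec i j k, Finset.mul_sum]
      exact Finset.sum_congr rfl fun s _ => by ring
    rw [Finset.sum_congr rfl fun i _ => h1 i, Finset.sum_comm]
    exact Finset.sum_congr rfl fun s _ => by rw [← Finset.sum_mul]
  set φ : (Fin 4 → ℝ) → Fin 6 → ℝ := fun t s => ∑ i, t i * u s i with hφdef
  have hφ : ∀ (a b : Fin 4 → ℝ) (x : ℝ) (s : Fin 6),
      φ (fun i => a i + x * b i) s = φ a s + x * φ b s := by
    intro a b x s
    simp [hφdef, add_mul, mul_assoc, Finset.sum_add_distrib, Finset.mul_sum]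
  have hex6 : ∃ s6, φ (eb 3) s6 ≠ 0 := by
    by_contra hc; push_neg at hc
    have h := hA (eb 3) 0 3
    have hz : ∑ s : Fin 6, (∑ i, eb 3 i * u s i) * (v s 0 * w s 3) = 0 :=
      Finset.sum_eq_zero fun s _ => by
        rw [show (∑ i, eb 3 i * u s i) = 0 from hc s, zero_mul]
    rw [hz] at h
    simp only [Fin.sum_univ_four, eb] at h
    norm_num [T0, tv] at h
  obtain ⟨s6, hs6⟩ := hex6
  set ν : ℝ := -(φ (eb 2) s6 / φ (eb 3) s6) with hν
  set g : Fin 4 → ℝ := fun i => eb 2 i + ν * eb 3 i with hg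
  have hgs6 : φ g s6 = 0 := by
    rw [hg, hφ, hν]; field_simp; ring
  have hex5 : ∃ s5, s5 ≠ s6 ∧ φ g s5 ≠ 0 := by
    by_contra hc; push_neg at hc
    have hall : ∀ s, φ g s = 0 := by
      intro s; by_cases h : s = s6
      · rw [h]; exact hgs6
      · exact hc s h
    have h := hA g 0 2
    have hz : ∑ s : Fin 6, (∑ i, g i * u s i) * (v s 0 * w s 2) = 0 :=
      Finset.sum_eq_zero fun s _ => by
        rw [show (∑ i, g i * u s i) = 0 from hall s, zero_mul]
    rw [hz] at h
    simp only [Fin.sum_univ_four, hg, eb] at h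
    norm_num [T0, tv] at h
  obtain ⟨s5, hs5ne, hs5⟩ := hex5
  set lamA : ℝ := -(φ (eb 0) s6 / φ (eb 3) s6) with hlamA
  set h1v : Fin 4 → ℝ := fun i => eb 0 i + lamA * eb 3 i with hh1v
  have hh1s6 : φ h1v s6 = 0 := by rw [hh1v, hφ, hlamA]; field_simp; ring
  set muA : ℝ := -(φ h1v s5 / φ g s5) with hmuA
  set p : Fin 4 → ℝ := fun i => h1v i + muA * g i with hp
  have hps5 : φ p s5 = 0 := by rw [hp, hφ, hmuA]; field_simp; ring
  have hps6 : φ p s6 = 0 := by rw [hp, hφ, hh1s6, hgs6]; ring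
  set lamB : ℝ := -(φ (eb 1) s6 / φ (eb 3) s6) with hlamB
  set h2v : Fin 4 → ℝ := fun i => eb 1 i + lamB * eb 3 i with hh2v
  have hh2s6 : φ h2v s6 = 0 := by rw [hh2v, hφ, hlamB]; field_simp; ring
  set muB : ℝ := -(φ h2v s5 / φ g s5) with hmuB
  set q : Fin 4 → ℝ := fun i => h2v i + muB * g i with hq
  have hqs5 : φ q s5 = 0 := by rw [hq, hφ, hmuB]; field_simp; ring
  have hqs6 : φ q s6 = 0 := by rw [hq, hφ, hh2s6, hgs6]; ring
  have hp0 : p 0 = 1 := by simp [hp, hh1v, hg, eb]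
  have hp1 : p 1 = 0 := by simp [hp, hh1v, hg, eb]
  have hq0 : q 0 = 0 := by simp [hq, hh2v, hg, eb]
  have hq1 : q 1 = 1 := by simp [hq, hh2v, hg, eb]
  have hmem : s6 ∈ (univ : Finset (Fin 6)).erase s5 := by
    simp [Finset.mem_erase]; exact fun h => hs5ne h.symm
  have hcard : (((univ : Finset (Fin 6)).erase s5).erase s6).card = 4 := by
    rw [Finset.card_erase_of_mem hmem, Finset.card_erase_of_mem (Finset.mem_univ s5)]
    simp
  set Sc := ((univ : Finset (Fin 6)).erase s5).erase s6 with hSc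
  set ε := Sc.equivFinOfCardEq hcard with hε
  set E : Fin 4 → Fin 6 := fun i => (ε.symm i : Fin 6) with hE
  have hsum : ∀ F : Fin 6 → ℝ, F s5 = 0 → F s6 = 0 → ∑ s, F s = ∑ i : Fin 4, F (E i) := by
    intro F h5 h6
    have h1 : ∑ s ∈ Sc, F s = ∑ s, F s := by
      refine Finset.sum_subset (Finset.subset_univ _) (fun x _ hx => ?_)
      rw [hSc] at hx
      simp only [Finset.mem_erase, Finset.mem_univ, and_true, not_and, not_not] at hx
      by_cases h : x = s6
      · rw [h]; exact h6
      · rw [hx h]; exact h5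
    rw [← h1, ← Finset.sum_coe_sort Sc F, ← Equiv.sum_comp ε.symm (fun x : Sc => F x)]
  set K : ℝ := (Matrix.of fun j i => v (E i) j).det * (Matrix.of fun k i => w (E i) k).det with hK
  have key : ∀ y : ℝ,
      (∏ i : Fin 4, (φ p (E i) + y * φ q (E i))) * K
        = -(1/81) * (1 * (3*1 + y^2 + (p 2 + y * q 2)^2 + (p 3 + y * q 3)^2)) := by
    intro y
    set ty : Fin 4 → ℝ := fun i => p i + y * q i with hty
    have hty5 : φ ty s5 = 0 := by rw [hty, hφ, hps5, hqs5]; ring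
    have hty6 : φ ty s6 = 0 := by rw [hty, hφ, hps6, hqs6]; ring
    have hmat : (Matrix.of fun j k => ∑ i, ty i * T0 i j k)
        = Matrix.of fun j k => ∑ i : Fin 4, (φ ty (E i)) * (v (E i) j * w (E i) k) := by
      ext j k
      simp only [Matrix.of_apply]
      rw [hA ty j k]
      exact hsum (fun s => φ ty s * (v s j * w s k))
        (by simp only [hty5, zero_mul]) (by simp only [hty6, zero_mul])
    have h2 := detA ty
    rw [hmat, detouter] at h2
    have hty0 : ty 0 = 1 := by rw [hty]; simp only []; rw [hp0, hq0]; ring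
    have hty1 : ty 1 = y := by rw [hty]; simp only []; rw [hp1, hq1]; ring
    rw [hty0, hty1] at h2
    have hφty : ∀ i : Fin 4, φ ty (E i) = φ p (E i) + y * φ q (E i) := by
      intro i; rw [hty, hφ]
    have hprodeq : (∏ i : Fin 4, φ ty (E i)) = ∏ i : Fin 4, (φ p (E i) + y * φ q (E i)) :=
      Finset.prod_congr rfl fun i _ => hφty i
    rw [hprodeq] at h2
    have h3 : ty 2 = p 2 + y * q 2 := rfl
    have h4 : ty 3 = p 3 + y * q 3 := rfl
    rw [hK, h2, h3, h4]; ring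
  by_cases hball : ∀ i : Fin 4, φ q (E i) = 0
  · have k0 := key 0
    have k1 := key 1
    have km := key (-1)
    have hpr : ∀ y : ℝ, (∏ i : Fin 4, (φ p (E i) + y * φ q (E i))) = ∏ i : Fin 4, φ p (E i) :=
      fun y => Finset.prod_congr rfl fun i _ => by rw [hball i]; ring
    rw [hpr 0] at k0
    rw [hpr 1] at k1
    rw [hpr (-1)] at km
    clear_value K q p
    nlinarith [k0, k1, km, sq_nonneg (q 2), sq_nonneg (q 3)]
  · push_neg at hball
    obtain ⟨i0, hB0⟩ := hball
    have hky := key (-(φ p (E i0)) / (φ q (E i0)))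
    rw [Finset.prod_eq_zero (Finset.mem_univ i0) (by field_simp; ring)] at hky
    rw [zero_mul] at hky
    clear_value K q p φ E
    nlinarith [hky, sq_nonneg (-(φ p (E i0)) / (φ q (E i0))),
      sq_nonneg (p 2 + (-(φ p (E i0)) / (φ q (E i0))) * q 2),
      sq_nonneg (p 3 + (-(φ p (E i0)) / (φ q (E i0))) * q 3)]

lemma no_small (r : ℕ) (hr : r ≤ 6) (u v w : Fin r → Fin 4 → ℝ)
    (hdec : ∀ i j k, T0 i j k = ∑ s, u s i * v s j * w s k) : False := by
  apply no6
  have he : r + (6 - r) = 6 := by omega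
  set κ : Fin (r + (6 - r)) ≃ Fin 6 := finCongr he with hκ
  refine ⟨fun s => Fin.addCases u (fun _ _ => 0) (κ.symm s),
          fun s => Fin.addCases v (fun _ _ => 0) (κ.symm s),
          fun s => Fin.addCases w (fun _ _ => 0) (κ.symm s), ?_⟩
  intro i j k
  rw [hdec i j k]
  set G : Fin (r + (6 - r)) → ℝ := fun x =>
    Fin.addCases (motive := fun _ => Fin 4 → ℝ) u (fun _ _ => 0) x i *
      Fin.addCases (motive := fun _ => Fin 4 → ℝ) v (fun _ _ => 0) x j *
      Fin.addCases (motive := fun _ => Fin 4 → ℝ) w (fun _ _ => 0) x k with hG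
  have h1 : ∑ s : Fin 6, G (κ.symm s) = ∑ x, G x :=
    Fintype.sum_equiv κ.symm (fun s => G (κ.symm s)) G (fun s => rfl)
  have h2 : ∑ x, G x = ∑ s : Fin r, u s i * v s j * w s k := by
    rw [hG, Fin.sum_univ_add]
    simp [Fin.addCases_left, Fin.addCases_right]
  exact (h1.trans h2).symm

/-! ### The rank-seven decomposition -/

noncomputable def Lv (s i : ℕ) : ℝ :=
  if i = 0 then 1 else if s = 2*i - 1 then 1 else if s = 2*i then -1 else 0
noncomputable def lamv (s : ℕ) : ℝ := if s = 0 then 2 else -1/6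
noncomputable def LL (s : Fin 7) (i : Fin 4) : ℝ := Lv s.1 i.1
noncomputable def lam7 (s : Fin 7) : ℝ := lamv s.1

set_option maxHeartbeats 2000000 in
lemma decomposition7 : ∀ i j k, T0 i j k =
    ∑ s : Fin 7, (lam7 s * LL s i) * LL s j * LL s k := by
  intro i j k
  fin_cases i <;> fin_cases j <;> fin_cases k <;>
    norm_num [Fin.sum_univ_seven, T0, tv, LL, Lv, lam7, lamv] <;> norm_num [Fin.ext_iff]

lemma mem7 : 7 ∈ {r : ℕ | ∃ u v w : Fin r → Fin 4 → ℝ,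
    ∀ i j k, T0 i j k = ∑ s, u s i * v s j * w s k} :=
  ⟨fun s i => lam7 s * LL s i, LL, LL, decomposition7⟩

lemma tensorRank_T0 : tensorRank T0 = 7 := by
  refine le_antisymm (Nat.sInf_le mem7) (le_csInf ⟨7, mem7⟩ ?_)
  rintro b ⟨u, v, w, hdec⟩
  by_contra hb
  push_neg at hb
  exact no_small b (by omega) u v w hdec

/-! ### Polynomial identities -/

lemma hC3 : (C (1/3 : ℝ) : MvPolynomial (Fin 4) ℝ) * 3 = 1 := by
  rw [← _root_.map_ofNat (C : ℝ →+* MvPolynomial (Fin 4) ℝ) 3, ← _root_.map_mul]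
  norm_num

lemma hC6 : (C (1/6 : ℝ) : MvPolynomial (Fin 4) ℝ) * 6 = 1 := by
  rw [← _root_.map_ofNat (C : ℝ →+* MvPolynomial (Fin 4) ℝ) 6, ← _root_.map_mul]
  norm_num

set_option maxHeartbeats 2000000 in
lemma hfT0 : (X 0 * (X 0 ^ 2 - X 1 ^ 2 - X 2 ^ 2 - X 3 ^ 2) : MvPolynomial (Fin 4) ℝ)
    = ∑ i, ∑ j, ∑ k, C (T0 i j k) * X i * X j * X k := by
  simp only [Fin.sum_univ_four]
  norm_num [T0, tv]
  linear_combination (X 0 * X 1^2 + X 0 * X 2^2 + X 0 * X 3^2 : MvPolynomial (Fin 4) ℝ) * hC3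

set_option maxHeartbeats 2000000 in
lemma waring7 : (X 0 * (X 0 ^ 2 - X 1 ^ 2 - X 2 ^ 2 - X 3 ^ 2) : MvPolynomial (Fin 4) ℝ)
    = ∑ s : Fin 7, C (lam7 s) * (∑ i, C (LL s i) * X i) ^ 3 := by
  simp only [Fin.sum_univ_seven, Fin.sum_univ_four]
  norm_num [LL, Lv, lam7, lamv, _root_.map_ofNat]
  linear_combination (X 0^3 + X 0 * X 1^2 + X 0 * X 2^2 + X 0 * X 3^2 : MvPolynomial (Fin 4) ℝ) * hC6

/-! ### Evaluation lemmas -/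

lemma evalP (T : Fin 4 → Fin 4 → Fin 4 → ℝ)
    (hfT : (X 0 * (X 0 ^ 2 - X 1 ^ 2 - X 2 ^ 2 - X 3 ^ 2) : MvPolynomial (Fin 4) ℝ)
      = ∑ i, ∑ j, ∑ k, C (T i j k) * X i * X j * X k) :
    ∀ x : Fin 4 → ℝ, (∑ i, ∑ j, ∑ k, T i j k * x i * x j * x k)
      = x 0 * (x 0^2 - x 1^2 - x 2^2 - x 3^2) := by
  intro x
  have h := congrArg (eval x) hfT
  simp only [_root_.map_sum, _root_.map_mul, _root_.map_pow, _root_.map_sub, eval_C, eval_X] at h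
  exact h.symm

lemma cube_expand {R : Type*} [CommRing R] (g : Fin 4 → R) :
    (∑ i, g i)^3 = ∑ i, ∑ j, ∑ k, g i * g j * g k := by
  rw [pow_succ, pow_succ, pow_one, Finset.sum_mul_sum, Finset.sum_mul]
  refine Finset.sum_congr rfl fun i _ => ?_
  rw [Finset.sum_mul]
  refine Finset.sum_congr rfl fun j _ => ?_
  rw [Finset.mul_sum]

lemma sum_swap4 {m : ℕ} (F : Fin 4 → Fin 4 → Fin 4 → Fin m → ℝ) :
    ∑ i, ∑ j, ∑ k, ∑ s, F i j k s = ∑ s, ∑ i, ∑ j, ∑ k, F i j k s := by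
  have step1 : ∑ i, ∑ j, ∑ k, ∑ s, F i j k s = ∑ i, ∑ j, ∑ s, ∑ k, F i j k s :=
    Finset.sum_congr rfl fun i _ => Finset.sum_congr rfl fun j _ => Finset.sum_comm
  have step2 : ∑ i, ∑ j, ∑ s, ∑ k, F i j k s = ∑ i, ∑ s, ∑ j, ∑ k, F i j k s :=
    Finset.sum_congr rfl fun i _ => Finset.sum_comm
  have step3 : ∑ i, ∑ s, ∑ j, ∑ k, F i j k s = ∑ s, ∑ i, ∑ j, ∑ k, F i j k s :=
    Finset.sum_comm
  rw [step1, step2, step3]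

lemma sumjuggle {m : ℕ} (lam : Fin m → ℝ) (l : Fin m → Fin 4 → ℝ) (x : Fin 4 → ℝ) :
    ∑ i, ∑ j, ∑ k, (∑ s, lam s * (l s i * l s j * l s k)) * x i * x j * x k
      = ∑ s, lam s * (∑ i, l s i * x i)^3 := by
  have hA : ∀ i j k : Fin 4, (∑ s, lam s * (l s i * l s j * l s k)) * x i * x j * x k
      = ∑ s, lam s * ((l s i * x i) * ((l s j * x j) * (l s k * x k))) := by
    intro i j k
    rw [Finset.sum_mul, Finset.sum_mul, Finset.sum_mul]
    exact Finset.sum_congr rfl fun s _ => by ring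
  have h1 : ∑ i, ∑ j, ∑ k, (∑ s, lam s * (l s i * l s j * l s k)) * x i * x j * x k
      = ∑ i, ∑ j, ∑ k, ∑ s, lam s * ((l s i * x i) * ((l s j * x j) * (l s k * x k))) :=
    Finset.sum_congr rfl fun i _ => Finset.sum_congr rfl fun j _ =>
      Finset.sum_congr rfl fun k _ => hA i j k
  rw [h1, sum_swap4]
  refine Finset.sum_congr rfl fun s _ => ?_
  rw [cube_expand (fun i => l s i * x i), Finset.mul_sum]
  refine Finset.sum_congr rfl fun i _ => ?_
  rw [Finset.mul_sum]
  refine Finset.sum_congr rfl fun j _ => ?_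
  rw [Finset.mul_sum]
  exact Finset.sum_congr rfl fun k _ => by ring

end MinkowskiCubicAux

open MvPolynomial MinkowskiCubicAux in
/-- The cubic surface `x₁(x₁² - x₂² - x₃² - x₄²)` has real rank seven and real Waring
rank seven. -/
theorem real_rank_of_minkowski_cubic :
    cubicRank (X 0 * (X 0 ^ 2 - X 1 ^ 2 - X 2 ^ 2 - X 3 ^ 2) : MvPolynomial (Fin 4) ℝ) = 7 ∧
    waringRank (X 0 * (X 0 ^ 2 - X 1 ^ 2 - X 2 ^ 2 - X 3 ^ 2) : MvPolynomial (Fin 4) ℝ) = 7 := by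
  constructor
  · -- cubic rank
    refine le_antisymm (Nat.sInf_le ⟨T0, T0_sym, hfT0, le_of_eq tensorRank_T0⟩)
      (le_csInf ⟨7, T0, T0_sym, hfT0, le_of_eq tensorRank_T0⟩ ?_)
    rintro b ⟨T, hsymT, hfT, hrank⟩
    have h01 : ∀ i j k, T i j k = T j i k := by
      intro i j k
      have h := hsymT (Equiv.swap 0 1) ![i, j, k]
      simp [Equiv.swap_apply_def, Fin.ext_iff] at h
      exact h.symm
    have h12 : ∀ i j k, T i j k = T i k j := by
      intro i j k
      have h := hsymT (Equiv.swap 1 2) ![i, j, k]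
      simp [Equiv.swap_apply_def, Fin.ext_iff] at h
      exact h.symm
    have hTeq : T = T0 := uniq' T h01 h12 (evalP T hfT)
    rw [hTeq, tensorRank_T0] at hrank
    exact hrank
  · -- Waring rank
    refine le_antisymm (Nat.sInf_le ⟨lam7, LL, waring7⟩)
      (le_csInf ⟨7, lam7, LL, waring7⟩ ?_)
    rintro b ⟨lam, l, hf⟩
    set T' : Fin 4 → Fin 4 → Fin 4 → ℝ :=
      fun i j k => ∑ s, lam s * (l s i * l s j * l s k) with hT'
    have h01 : ∀ i j k, T' i j k = T' j i k := by
      intro i j k; rw [hT']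
      exact Finset.sum_congr rfl fun s _ => by ring
    have h12 : ∀ i j k, T' i j k = T' i k j := by
      intro i j k; rw [hT']
      exact Finset.sum_congr rfl fun s _ => by ring
    have hP : ∀ x : Fin 4 → ℝ, (∑ i, ∑ j, ∑ k, T' i j k * x i * x j * x k)
        = x 0 * (x 0^2 - x 1^2 - x 2^2 - x 3^2) := by
      intro x
      have h := congrArg (eval x) hf
      simp only [map_sum, map_mul, map_pow, map_sub, eval_C, eval_X] at h
      have h2 : ∑ i, ∑ j, ∑ k, T' i j k * x i * x j * x k
          = ∑ s, lam s * (∑ i, l s i * x i)^3 := by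
        rw [hT']
        exact sumjuggle lam l x
      rw [h2, ← h]
    have hT'eq : T' = T0 := uniq' T' h01 h12 hP
    have hdec : ∀ i j k, T0 i j k = ∑ s, (lam s * l s i) * l s j * l s k := by
      intro i j k
      rw [← hT'eq, hT']
      exact Finset.sum_congr rfl fun s _ => by ring
    have hb : b ∈ {r : ℕ | ∃ u v w : Fin r → Fin 4 → ℝ,
        ∀ i j k, T0 i j k = ∑ s, u s i * v s j * w s k} :=
      ⟨fun s i => lam s * l s i, l, l, hdec⟩
    calc 7 = tensorRank T0 := tensorRank_T0.symm
    _ ≤ b := Nat.sInf_le hb
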